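/- arXiv:2210.00967 — 2 statements merged into one kernel-verified Lean document; each statement's English description precedes it below -/
import Mathlib

section
/- Let k be an algebraically closed field of characteristic p > 0, n, e positive integers with p^n·e ≥ 3, Q(X, Y) ∈ k[X, Y] homogeneous of degree e with nonzero coefficient of Y^e, and F = Q(X^{p^n}, Y^{p^n}) − X^{p^n e − 1}·Y − Z^{p^n e − 1}·X ∈ k[X, Y, Z]. Then the polynomials F, ∂F/∂X, ∂F/∂Y, ∂F/∂Z have no common zero in k^3 other than (0, 0, 0); i.e. the projective plane curve {F = 0} ⊂ P^2 is smooth. Moreover, the only common projective zero of F and X is [0:0:1]. -/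
open MvPolynomial in
private lemma aux_eval_homog (k : Type) [CommRing k] (e : ℕ)
    (Q : MvPolynomial (Fin 2) k) (hQ : Q.IsHomogeneous e) (t : k) :
    eval ![0, t] Q = Q.coeff (Finsupp.single 1 e) * t ^ e := by
  rw [eval_eq']
  rw [Finset.sum_eq_single (Finsupp.single 1 e)]
  · simp [Fin.prod_univ_two]
  · intro d hd hne
    have hdeg := hQ (mem_support_iff.mp hd)
    have hsum : d 0 + d 1 = e := by
      simpa [Finsupp.weight_apply, Finsupp.sum_fintype, Fin.sum_univ_two] using hdeg
    have hd0 : d 0 ≠ 0 := by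
      intro h0
      apply hne
      ext i
      fin_cases i <;> simp [h0, ← hsum, h0]
    simp [Fin.prod_univ_two, Matrix.cons_val_zero, zero_pow hd0]
  · intro h
    simp [mem_support_iff, not_not] at h
    simp [h]

open MvPolynomial in
private lemma aux_pderiv_frob (k : Type) [CommRing k] (p : ℕ) [Fact p.Prime] [CharP k p]
    (n : ℕ) (hn : 0 < n) (i : Fin 3) (Q : MvPolynomial (Fin 2) k) :
    pderiv i (aeval ![(X 0 : MvPolynomial (Fin 3) k) ^ p ^ n,
      (X 1 : MvPolynomial (Fin 3) k) ^ p ^ n] Q) = 0 := by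
  have hq : ((p ^ n : ℕ) : MvPolynomial (Fin 3) k) = 0 := by
    have : CharP (MvPolynomial (Fin 3) k) p := inferInstance
    rw [Nat.cast_pow, CharP.cast_eq_zero (MvPolynomial (Fin 3) k) p, zero_pow hn.ne']
  induction Q using MvPolynomial.induction_on with
  | C a => simp
  | add f g hf hg => rw [map_add, map_add, hf, hg, add_zero]
  | mul_X f j hf =>
    rw [map_mul, pderiv_mul, hf]
    have : pderiv i ((aeval ![(X 0 : MvPolynomial (Fin 3) k) ^ p ^ n,
        (X 1 : MvPolynomial (Fin 3) k) ^ p ^ n]) (X j : MvPolynomial (Fin 2) k)) = 0 := by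
      fin_cases j <;> simp [pderiv_pow, hq]
    rw [this]
    ring

open MvPolynomial in
/-- smoothness of the Tango curves of Example 2.2, via the
Jacobian criterion.  Let `k` be an algebraically closed field of
characteristic `p > 0`, `n, e ≥ 1` with `p^n·e ≥ 3`, `Q(X, Y)` homogeneous of
degree `e` with nonzero coefficient of `Y^e`, and
`F = Q(X^{p^n}, Y^{p^n}) - X^{p^n e - 1}·Y - Z^{p^n e - 1}·X`.
Then `F` and its three formal partial derivatives have no common zero in
`k³ \ {0}`; i.e. the projective plane curve `{F = 0} ⊆ P²` is smooth.
Moreover, the only common projective zero of `F` and `X` is `[0:0:1]`. -/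
theorem statement14 (k : Type) [Field k] [IsAlgClosed k]
    (p : ℕ) [Fact p.Prime] [CharP k p]
    (n e : ℕ) (hn : 0 < n) (he : 0 < e) (h3 : 3 ≤ p ^ n * e)
    (Q : MvPolynomial (Fin 2) k) (hQ : Q.IsHomogeneous e)
    (hYe : Q.coeff (Finsupp.single 1 e) ≠ 0)
    (F : MvPolynomial (Fin 3) k)
    (hF : F = aeval ![(X 0 : MvPolynomial (Fin 3) k) ^ p ^ n,
        (X 1 : MvPolynomial (Fin 3) k) ^ p ^ n] Q
      - X 0 ^ (p ^ n * e - 1) * X 1 - X 2 ^ (p ^ n * e - 1) * X 0) :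
    (∀ v : Fin 3 → k, eval v F = 0 →
      eval v (pderiv 0 F) = 0 → eval v (pderiv 1 F) = 0 →
      eval v (pderiv 2 F) = 0 → v = 0) ∧
    (∀ v : Fin 3 → k, v ≠ 0 → eval v F = 0 → v 0 = 0 →
      ∃ c : k, c ≠ 0 ∧ v = c • ![0, 0, 1]) := by
  set q := p ^ n with hq
  set m := q * e - 1 with hm
  have hm2 : 2 ≤ m := by omega
  have hm1 : 1 ≤ m := by omega
  have hm0 : m ≠ 0 := by omega
  have hm10 : m - 1 ≠ 0 := by omega
  have hqe1 : 1 ≤ q * e := by omega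
  have hq0 : q ≠ 0 := by rintro h; rw [h, zero_mul] at h3; omega
  -- the characteristic facts
  have hqk : ((q : ℕ) : k) = 0 := by
    rw [hq, Nat.cast_pow, CharP.cast_eq_zero k p, zero_pow hn.ne']
  have hmk : ((m : ℕ) : k) = -1 := by
    rw [hm, Nat.cast_sub hqe1, Nat.cast_mul, hqk, zero_mul, Nat.cast_one, zero_sub]
  have hzq : (0:k) ^ q = 0 := zero_pow hq0
  have hzm : (0:k) ^ m = 0 := zero_pow hm0
  have hzm1 : (0:k) ^ (m-1) = 0 := zero_pow hm10
  -- evaluation of F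
  have hevalQ : ∀ v : Fin 3 → k,
      eval v (aeval ![(X 0 : MvPolynomial (Fin 3) k) ^ q,
        (X 1 : MvPolynomial (Fin 3) k) ^ q] Q) = eval ![v 0 ^ q, v 1 ^ q] Q := by
    intro v
    have harg : (fun i => eval₂Hom (RingHom.id k) v
        (![(X 0 : MvPolynomial (Fin 3) k) ^ q, (X 1 : MvPolynomial (Fin 3) k) ^ q] i))
        = ![v 0 ^ q, v 1 ^ q] := by
      funext i; fin_cases i <;> simp
    rw [show (aeval ![(X 0 : MvPolynomial (Fin 3) k) ^ q,
        (X 1 : MvPolynomial (Fin 3) k) ^ q] Q) = bind₁ ![(X 0 : MvPolynomial (Fin 3) k) ^ q,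
        (X 1 : MvPolynomial (Fin 3) k) ^ q] Q from rfl]
    rw [show (eval v : MvPolynomial (Fin 3) k →+* k) = eval₂Hom (RingHom.id k) v from rfl]
    rw [eval₂Hom_bind₁, harg]
    rfl
  have hevalF : ∀ v : Fin 3 → k,
      eval v F = eval ![v 0 ^ q, v 1 ^ q] Q - v 0 ^ m * v 1 - v 2 ^ m * v 0 := by
    intro v
    rw [hF]
    simp only [map_sub, map_mul, map_pow, eval_X, hevalQ]
  -- the partial derivatives
  have hfrob : ∀ i : Fin 3, pderiv i (aeval ![(X 0 : MvPolynomial (Fin 3) k) ^ q,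
      (X 1 : MvPolynomial (Fin 3) k) ^ q] Q) = 0 := by
    intro i
    rw [hq]
    exact aux_pderiv_frob k p n hn i Q
  have hD0 : ∀ v : Fin 3 → k, eval v (pderiv 0 F) = v 0 ^ (m - 1) * v 1 - v 2 ^ m := by
    intro v
    rw [hF]
    simp only [map_sub]
    rw [hfrob 0]
    rw [pderiv_mul, pderiv_mul, pderiv_pow, pderiv_pow]
    simp only [pderiv_X_self, pderiv_X_of_ne (show (1:Fin 3) ≠ 0 by decide),
      pderiv_X_of_ne (show (2:Fin 3) ≠ 0 by decide)]
    simp only [map_sub, map_add, map_mul, map_pow, eval_X, map_natCast, map_one, map_zero]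
    rw [hmk]
    ring
  have hD1 : ∀ v : Fin 3 → k, eval v (pderiv 1 F) = -(v 0 ^ m) := by
    intro v
    rw [hF]
    simp only [map_sub]
    rw [hfrob 1]
    rw [pderiv_mul, pderiv_mul, pderiv_pow, pderiv_pow]
    simp only [pderiv_X_self, pderiv_X_of_ne (show (0:Fin 3) ≠ 1 by decide),
      pderiv_X_of_ne (show (2:Fin 3) ≠ 1 by decide)]
    simp only [map_sub, map_add, map_mul, map_pow, eval_X, map_natCast, map_one, map_zero]
    ring
  have key : ∀ v : Fin 3 → k, eval v F = 0 → v 0 = 0 → v 1 = 0 := by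
    intro v hFv hv0
    rw [hevalF v, hv0, hzm, zero_mul, mul_zero, sub_zero, sub_zero, hzq] at hFv
    rw [aux_eval_homog k e Q hQ (v 1 ^ q)] at hFv
    rcases mul_eq_zero.mp hFv with h | h
    · exact absurd h hYe
    · exact pow_eq_zero_iff hq0 |>.mp (pow_eq_zero_iff he.ne' |>.mp h)
  constructor
  · intro v hFv h0 h1 h2
    rw [hD1 v, neg_eq_zero] at h1
    have hv0 : v 0 = 0 := pow_eq_zero_iff hm0 |>.mp h1
    rw [hD0 v, hv0, hzm1, zero_mul, zero_sub, neg_eq_zero] at h0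
    have hv2 : v 2 = 0 := pow_eq_zero_iff hm0 |>.mp h0
    have hv1 : v 1 = 0 := key v hFv hv0
    funext i
    fin_cases i <;> simp [hv0, hv1, hv2]
  · intro v hvne hFv hv0
    have hv1 : v 1 = 0 := key v hFv hv0
    have hv2 : v 2 ≠ 0 := by
      intro h
      apply hvne
      funext i
      fin_cases i <;> simp [hv0, hv1, h]
    refine ⟨v 2, hv2, ?_⟩
    funext i
    fin_cases i <;> simp [hv0, hv1]
end

section
/- Let k be an algebraically closed field of characteristic p > 0, n, e positive integers with p^n·e ≥ 3, and Q(X, Y) ∈ k[X, Y] homogeneous of degree e with nonzero coefficient of Y^e. Let A = k[x, y]/(Q(x^{p^n}, y^{p^n}) − x^{p^n e − 1}·y − x) and assume A is an integral domain with x ≠ 0 and y ≠ 0 in A; let K = Frac(A). Let R(X, Y) ∈ k[X, Y] be the homogeneous polynomial of degree e obtained from Q by replacing each coefficient by its (unique) p^n-th root, so that R(x, y)^{p^n} = Q(x^{p^n}, y^{p^n}). Then in K, setting z_1 = 1/x and z_2 = x^{p^n e − 2}·y / (Q(x^{p^n}, y^{p^n})·y^{p^n e(p^n e − 3)}), one has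 the identity z_1 = (y^{e(p^n e − 3)})^{p^n}·z_2 + (R(x, y)^{−1})^{p^n}. -/
set_option synthInstance.maxHeartbeats 1000000
set_option maxHeartbeats 1000000

open MvPolynomial in
/-- The affine equation `Q(x^{p^n}, y^{p^n}) - x^{p^n e - 1}·y - x` of the
chart `Z = 1` of the plane `n`-Tango curve of Example 2.2 (variables
`X 0 = x = X/Z`, `X 1 = y = Y/Z`). -/
noncomputable abbrev tangoChartAtInftyPoly (k : Type) [Field k] (p n e : ℕ)
    (Q : MvPolynomial (Fin 2) k) : MvPolynomial (Fin 2) k :=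
  aeval ![(X 0 : MvPolynomial (Fin 2) k) ^ p ^ n,
          (X 1 : MvPolynomial (Fin 2) k) ^ p ^ n] Q
    - X 0 ^ (p ^ n * e - 1) * X 1 - X 0

/-- The affine coordinate ring
`A = k[x, y]/(Q(x^{p^n}, y^{p^n}) - x^{p^n e - 1}·y - x)`. -/
abbrev tangoChartAtInftyRing (k : Type) [Field k] (p n e : ℕ)
    (Q : MvPolynomial (Fin 2) k) : Type :=
  MvPolynomial (Fin 2) k ⧸ Ideal.span {tangoChartAtInftyPoly k p n e Q}

open MvPolynomial in
lemma statement15_frob {k : Type} [Field k] (p : ℕ) [Fact p.Prime] [CharP k p]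
    (n : ℕ) (Q R : MvPolynomial (Fin 2) k)
    (hRQ : ∀ m : Fin 2 →₀ ℕ, R.coeff m ^ p ^ n = Q.coeff m)
    {S : Type} [CommRing S] [Algebra k S] [CharP S p] (v : Fin 2 → S) :
    (aeval v R) ^ p ^ n = aeval (fun i => v i ^ p ^ n) Q := by
  have hmap : MvPolynomial.map (iterateFrobenius k p n) R = Q := by
    ext m
    simp [MvPolynomial.coeff_map, iterateFrobenius_def, hRQ]
  have hcomp : (iterateFrobenius S p n).comp (algebraMap k S)
      = (algebraMap k S).comp (iterateFrobenius k p n) := by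
    ext c
    simp [iterateFrobenius_def, map_pow]
  calc (aeval v R) ^ p ^ n = iterateFrobenius S p n (aeval v R) := rfl
    _ = eval₂Hom ((iterateFrobenius S p n).comp (algebraMap k S))
          (fun i => v i ^ p ^ n) R := by rw [map_aeval]; rfl
    _ = aeval (fun i => v i ^ p ^ n) Q := by
        rw [hcomp, ← hmap, aeval_def, eval₂_map]; rfl

set_option maxHeartbeats 8000000 in
open MvPolynomial in
/-- the cocycle identity of Example 2.2.  Let
`A = k[x, y]/(Q(x^{p^n}, y^{p^n}) - x^{p^n e - 1}·y - x)` be a domain with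
`x ≠ 0 ≠ y`, `K = Frac(A)`, and let `R(X, Y)` be the homogeneous polynomial of
degree `e` whose coefficients are the `p^n`-th roots of those of `Q` (so
`R(x, y)^{p^n} = Q(x^{p^n}, y^{p^n})`).  Then, in `K`, setting `z₁ = 1/x` and
`z₂ = x^{p^n e - 2}·y / (Q(x^{p^n}, y^{p^n})·y^{p^n e(p^n e - 3)})`, one has
`z₁ = (y^{e(p^n e - 3)})^{p^n}·z₂ + (R(x, y)⁻¹)^{p^n}`. -/
theorem statement15 (k : Type) [Field k] [IsAlgClosed k]
    (p : ℕ) [Fact p.Prime] [CharP k p]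
    (n e : ℕ) (hn : 0 < n) (he : 0 < e) (h3 : 3 ≤ p ^ n * e)
    (Q R : MvPolynomial (Fin 2) k)
    (hQ : Q.IsHomogeneous e) (hYe : Q.coeff (Finsupp.single 1 e) ≠ 0)
    (hR : R.IsHomogeneous e)
    (hRQ : ∀ m : Fin 2 →₀ ℕ, R.coeff m ^ p ^ n = Q.coeff m)
    [IsDomain (tangoChartAtInftyRing k p n e Q)]
    (hx : (Ideal.Quotient.mk (Ideal.span {tangoChartAtInftyPoly k p n e Q})
      (X 0) : tangoChartAtInftyRing k p n e Q) ≠ 0)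
    (hy : (Ideal.Quotient.mk (Ideal.span {tangoChartAtInftyPoly k p n e Q})
      (X 1) : tangoChartAtInftyRing k p n e Q) ≠ 0) :
    let A := tangoChartAtInftyRing k p n e Q
    let K := FractionRing A
    let x : K := algebraMap A K
      (Ideal.Quotient.mk (Ideal.span {tangoChartAtInftyPoly k p n e Q}) (X 0))
    let y : K := algebraMap A K
      (Ideal.Quotient.mk (Ideal.span {tangoChartAtInftyPoly k p n e Q}) (X 1))
    let Qxy : K := algebraMap A K
      (Ideal.Quotient.mk (Ideal.span {tangoChartAtInftyPoly k p n e Q})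
        (aeval ![(X 0 : MvPolynomial (Fin 2) k) ^ p ^ n,
                 (X 1 : MvPolynomial (Fin 2) k) ^ p ^ n] Q))
    let Rxy : K := algebraMap A K
      (Ideal.Quotient.mk (Ideal.span {tangoChartAtInftyPoly k p n e Q})
        (aeval ![(X 0 : MvPolynomial (Fin 2) k),
                 (X 1 : MvPolynomial (Fin 2) k)] R))
    let z1 : K := x⁻¹
    let z2 : K := x ^ (p ^ n * e - 2) * y /
      (Qxy * y ^ (p ^ n * e * (p ^ n * e - 3)))
    z1 = (y ^ (e * (p ^ n * e - 3))) ^ p ^ n * z2 + Rxy⁻¹ ^ p ^ n := by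
  intro A K x y Qxy Rxy z1 z2
  have hq0 : p ^ n ≠ 0 := pow_ne_zero n (Fact.out (p := p.Prime)).pos.ne'
  set I : Ideal (MvPolynomial (Fin 2) k) :=
    Ideal.span {tangoChartAtInftyPoly k p n e Q} with hIdef
  show x⁻¹ = (y ^ (e * (p ^ n * e - 3))) ^ p ^ n *
      (x ^ (p ^ n * e - 2) * y / (Qxy * y ^ (p ^ n * e * (p ^ n * e - 3))))
      + Rxy⁻¹ ^ p ^ n
  have hxdef : x = algebraMap A K (Ideal.Quotient.mk I (X 0)) := rfl
  have hydef : y = algebraMap A K (Ideal.Quotient.mk I (X 1)) := rfl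
  have hQdef : Qxy = algebraMap A K (Ideal.Quotient.mk I
      (aeval ![(X 0 : MvPolynomial (Fin 2) k) ^ p ^ n, X 1 ^ p ^ n] Q)) := rfl
  have hRdef : Rxy = algebraMap A K (Ideal.Quotient.mk I
      (aeval ![(X 0 : MvPolynomial (Fin 2) k), X 1] R)) := rfl
  haveI : CharP A p := charP_of_injective_algebraMap (algebraMap k A).injective p
  haveI : CharP K p := charP_of_injective_ringHom (IsFractionRing.injective A K) p
  have hinj : Function.Injective (algebraMap A K) := IsFractionRing.injective A K
  have hx' : x ≠ 0 := fun h => hx (hinj (by rw [map_zero]; exact hxdef ▸ h))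
  have hy' : y ≠ 0 := fun h => hy (hinj (by rw [map_zero]; exact hydef ▸ h))
  -- the relation in A
  have hPmem : tangoChartAtInftyPoly k p n e Q ∈ I :=
    Ideal.mem_span_singleton_self _
  have hrelA : Ideal.Quotient.mk I (aeval ![(X 0 : MvPolynomial (Fin 2) k) ^ p ^ n,
        X 1 ^ p ^ n] Q)
      = Ideal.Quotient.mk I (X 0 ^ (p ^ n * e - 1) * X 1 + X 0) := by
    rw [Ideal.Quotient.eq]
    have h : aeval ![(X 0 : MvPolynomial (Fin 2) k) ^ p ^ n, X 1 ^ p ^ n] Q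
        - (X 0 ^ (p ^ n * e - 1) * X 1 + X 0) = tangoChartAtInftyPoly k p n e Q := by
      unfold tangoChartAtInftyPoly; ring
    rw [h]; exact hPmem
  -- evaluation at (0,0) kills the tango polynomial
  have hgP : (aeval (fun _ : Fin 2 => (0 : k))) (tangoChartAtInftyPoly k p n e Q) = 0 := by
    have hc : constantCoeff Q = 0 :=
      hQ.coeff_eq_zero (by simpa using he.ne)
    have h1 : (aeval (fun _ : Fin 2 => (0 : k)))
        (aeval ![(X 0 : MvPolynomial (Fin 2) k) ^ p ^ n, X 1 ^ p ^ n] Q) = 0 := by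
      rw [comp_aeval_apply]
      have h2 : (fun i => (aeval (fun _ : Fin 2 => (0 : k)))
          (![(X 0 : MvPolynomial (Fin 2) k) ^ p ^ n, X 1 ^ p ^ n] i))
          = fun _ : Fin 2 => (0 : k) := by
        funext i; fin_cases i <;> simp [zero_pow hq0]
      rw [h2, aeval_zero', hc, map_zero]
    unfold tangoChartAtInftyPoly
    simp only [map_sub, map_mul, map_pow, aeval_X, h1]
    ring
  -- Qxy ≠ 0 in A
  have hQA : (Ideal.Quotient.mk I (aeval ![(X 0 : MvPolynomial (Fin 2) k) ^ p ^ n,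
      X 1 ^ p ^ n] Q) : A) ≠ 0 := by
    intro h0
    have h2 : (Ideal.Quotient.mk I
        ((X 0 : MvPolynomial (Fin 2) k) ^ (p ^ n * e - 1) * X 1 + X 0) : A) = 0 := by
      rw [← hrelA]; exact h0
    have hfac : (X 0 : MvPolynomial (Fin 2) k) ^ (p ^ n * e - 1) * X 1 + X 0
        = X 0 * (X 0 ^ (p ^ n * e - 2) * X 1 + 1) := by
      rw [show p ^ n * e - 1 = (p ^ n * e - 2) + 1 from by omega]; ring
    rw [hfac, map_mul] at h2
    rcases mul_eq_zero.mp h2 with h3 | h3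
    · exact hx h3
    · have hmem : (X 0 : MvPolynomial (Fin 2) k) ^ (p ^ n * e - 2) * X 1 + 1 ∈ I :=
        Ideal.Quotient.eq_zero_iff_mem.mp h3
      obtain ⟨c, hc⟩ := Ideal.mem_span_singleton.mp hmem
      have := congrArg (aeval (fun _ : Fin 2 => (0 : k))) hc
      simp only [map_add, map_mul, map_pow, aeval_X, map_one, hgP, zero_mul, mul_zero] at this
      simpa using this
  have hQ0 : Qxy ≠ 0 := fun h => hQA (hinj (by rw [map_zero]; exact hQdef ▸ h))
  -- relation in K
  have hrelK : Qxy = x ^ (p ^ n * e - 1) * y + x := by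
    rw [hQdef, hrelA, hxdef, hydef]
    simp only [map_add, map_mul, map_pow]
  -- Frobenius relation : Rxy ^ p^n = Qxy
  have hmkR : (Ideal.Quotient.mk I
        (aeval ![(X 0 : MvPolynomial (Fin 2) k), X 1] R) : A)
      = aeval ![Ideal.Quotient.mk I (X 0), Ideal.Quotient.mk I (X 1)] R := by
    have hv : (fun i => (Ideal.Quotient.mkₐ k I) (![(X 0 : MvPolynomial (Fin 2) k), X 1] i))
        = ![Ideal.Quotient.mk I (X 0), Ideal.Quotient.mk I (X 1)] := by
      funext i; fin_cases i <;> simp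
    rw [← Ideal.Quotient.mkₐ_eq_mk k I, comp_aeval_apply, hv]
    rfl
  have hmkQ : (Ideal.Quotient.mk I
        (aeval ![(X 0 : MvPolynomial (Fin 2) k) ^ p ^ n, X 1 ^ p ^ n] Q) : A)
      = aeval (fun i => (![Ideal.Quotient.mk I (X 0), Ideal.Quotient.mk I (X 1)] i) ^ p ^ n)
          Q := by
    have hv : (fun i => (Ideal.Quotient.mkₐ k I) (![(X 0 : MvPolynomial (Fin 2) k) ^ p ^ n, X 1 ^ p ^ n] i))
        = fun i => (![Ideal.Quotient.mk I (X 0), Ideal.Quotient.mk I (X 1)] i) ^ p ^ n := by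
      funext i; fin_cases i <;> simp
    rw [← Ideal.Quotient.mkₐ_eq_mk k I, comp_aeval_apply, hv]
    simp only [Ideal.Quotient.mkₐ_eq_mk]
  have hRqB : (Ideal.Quotient.mk I
        (aeval ![(X 0 : MvPolynomial (Fin 2) k), X 1] R) : A) ^ p ^ n
      = Ideal.Quotient.mk I
        (aeval ![(X 0 : MvPolynomial (Fin 2) k) ^ p ^ n, X 1 ^ p ^ n] Q) := by
    rw [hmkR, hmkQ]
    exact statement15_frob p n Q R hRQ _
  have hRqK : Rxy ^ p ^ n = Qxy := by
    rw [hRdef, hQdef, ← map_pow, hRqB]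
  have hR0 : Rxy ≠ 0 := fun h => hQ0 (by rw [← hRqK, h, zero_pow hq0])
  -- final computation
  have hpowy : (y ^ (e * (p ^ n * e - 3))) ^ p ^ n
      = y ^ (p ^ n * e * (p ^ n * e - 3)) := by
    rw [← pow_mul]
    congr 1
    generalize p ^ n * e - 3 = t
    ring
  have hRinv : Rxy⁻¹ ^ p ^ n = Qxy⁻¹ := by rw [inv_pow, hRqK]
  rw [hpowy, hRinv]
  have hx1 : x ^ (p ^ n * e - 1) = x ^ (p ^ n * e - 2) * x := by
    rw [← pow_succ]
    congr 1
    omega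
  rw [hx1] at hrelK
  have hya : y ^ (p ^ n * e * (p ^ n * e - 3)) ≠ 0 := pow_ne_zero _ hy'
  have e1 : y ^ (p ^ n * e * (p ^ n * e - 3)) *
      (x ^ (p ^ n * e - 2) * y / (Qxy * y ^ (p ^ n * e * (p ^ n * e - 3))))
      = x ^ (p ^ n * e - 2) * y / Qxy := by
    rw [mul_comm Qxy (y ^ (p ^ n * e * (p ^ n * e - 3))), ← div_div,
      ← mul_div_assoc, ← mul_div_assoc, mul_div_cancel_left₀ _ hya]
  rw [e1, inv_eq_one_div Qxy, ← add_div]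
  have key : Qxy = x * (x ^ (p ^ n * e - 2) * y + 1) := by
    rw [hrelK]; ring
  have ht : x ^ (p ^ n * e - 2) * y + 1 ≠ 0 :=
    fun h => hQ0 (by rw [key, h, mul_zero])
  rw [key, mul_comm x, ← div_div, div_self ht, one_div]
end
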